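/- With κ_m = κ_c = 1 and κ_s = 1 − iδ, δ ∈ (0,1), 0 < ρ < 1, r_e > 0, the coefficients b_n = −ρ^{2n+1}κ_m(2n+1)((n+1)κ_s + nκ_c)/D_n and c_n = −r_e^{2n+1}κ_m n(2n+1)(κ_s − κ_c)/D_n, where D_n = (n²+n)(κ_s−κ_c)(κ_s−κ_m) − ρ^{2n+1}((n+1)κ_s+nκ_c)((n+1)κ_m+nκ_s), satisfy |b_n| ≍ ρ^{2n}/(δ² + ρ^{2n}) and |c_n| ≍ δ r_e^{2n}/(δ² + ρ^{2n}), with implicit constants independent of n and δ. -/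

import Mathlib

/-- The determinant `D_n` with `κ_m = κ_c = 1`, `κ_s = 1 − iδ`. -/
noncomputable def Dn (ρ δ : ℝ) (n : ℕ) : ℂ :=
  ((n : ℂ) ^ 2 + n) * ((1 - δ * Complex.I) - 1) * ((1 - δ * Complex.I) - 1)
    - (ρ : ℂ) ^ (2 * n + 1) * (((n : ℂ) + 1) * (1 - δ * Complex.I) + n * 1)
      * (((n : ℂ) + 1) * 1 + n * (1 - δ * Complex.I))

/-- The coefficient `b_n = −ρ^{2n+1}κ_m(2n+1)((n+1)κ_s + nκ_c)/D_n`. -/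
noncomputable def bn (ρ δ re : ℝ) (n : ℕ) : ℂ :=
  -(ρ : ℂ) ^ (2 * n + 1) * 1 * (2 * (n : ℂ) + 1)
      * (((n : ℂ) + 1) * (1 - δ * Complex.I) + n * 1) / Dn ρ δ n

/-- The coefficient `c_n = −r_e^{2n+1}κ_m n(2n+1)(κ_s − κ_c)/D_n`. -/
noncomputable def cn (ρ δ re : ℝ) (n : ℕ) : ℂ :=
  -(re : ℂ) ^ (2 * n + 1) * 1 * n * (2 * (n : ℂ) + 1)
      * ((1 - δ * Complex.I) - 1) / Dn ρ δ n

lemma aux_abs_lb (x y : ℝ) : |x| ≤ ‖(x : ℂ) + (y : ℂ) * Complex.I‖ := by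
  simpa using Complex.abs_re_le_norm ((x : ℂ) + (y : ℂ) * Complex.I)

lemma aux_abs_ub (x y : ℝ) : ‖(x : ℂ) + (y : ℂ) * Complex.I‖ ≤ |x| + |y| := by
  simpa using Complex.norm_le_abs_re_add_abs_im ((x : ℂ) + (y : ℂ) * Complex.I)

lemma keyAlow (ρ δ m P R α : ℝ) (hm : 1 ≤ m) (hα1 : α ≤ 1 - ρ ^ 3) (hα2 : α ≤ ρ)
    (hα0 : 0 < α) (hP3 : P ≤ ρ ^ 3) (hPR : P = R * ρ) (hR0 : 0 < R) (h0 : 0 < ρ) :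
    α * (m ^ 2 * (δ ^ 2 + R)) ≤ m * (m + 1) * δ ^ 2 * (1 - P) + P * (2 * m + 1) ^ 2 := by
  have h1p : α ≤ 1 - P := by linarith
  have e1 : α * (m ^ 2 * δ ^ 2) ≤ m * (m + 1) * δ ^ 2 * (1 - P) := by
    have h1 : m ^ 2 * δ ^ 2 ≤ m * (m + 1) * δ ^ 2 := by
      nlinarith [mul_nonneg (by linarith : (0:ℝ) ≤ m) (sq_nonneg δ)]
    calc α * (m ^ 2 * δ ^ 2) = (m ^ 2 * δ ^ 2) * α := by ring
    _ ≤ (m * (m + 1) * δ ^ 2) * (1 - P) :=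
      mul_le_mul h1 h1p hα0.le
        (mul_nonneg (mul_nonneg (by linarith) (by linarith)) (sq_nonneg δ))
    _ = m * (m + 1) * δ ^ 2 * (1 - P) := by ring
  have e2 : α * (m ^ 2 * R) ≤ P * (2 * m + 1) ^ 2 := by
    rw [hPR]
    have h2 : α * (m ^ 2 * R) ≤ ρ * (m ^ 2 * R) :=
      mul_le_mul_of_nonneg_right hα2 (mul_nonneg (sq_nonneg m) hR0.le)
    nlinarith [mul_nonneg (mul_nonneg h0.le hR0.le)
      (show (0:ℝ) ≤ 3 * m ^ 2 + 4 * m + 1 by nlinarith)]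
  linarith [e1, e2]

lemma keyAhigh (δ m P R : ℝ) (hm : 1 ≤ m) (hP0 : 0 < P) (hPle : P ≤ R) (hR0 : 0 < R) :
    m * (m + 1) * δ ^ 2 * (1 - P) + P * (2 * m + 1) ^ 2 ≤ 9 * (m ^ 2 * (δ ^ 2 + R)) := by
  have haux1 : m * (m + 1) * (1 - P) ≤ 2 * m ^ 2 := by nlinarith
  have haux2 : (2 * m + 1) ^ 2 ≤ 9 * m ^ 2 := by nlinarith
  have e1 : m * (m + 1) * δ ^ 2 * (1 - P) ≤ 2 * m ^ 2 * δ ^ 2 := by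
    have := mul_le_mul_of_nonneg_right haux1 (sq_nonneg δ)
    nlinarith [this]
  have e2 : P * (2 * m + 1) ^ 2 ≤ R * (9 * m ^ 2) :=
    mul_le_mul hPle haux2 (sq_nonneg _) hR0.le
  nlinarith [e1, e2]

lemma keyBA (δ m P : ℝ) (hm : 1 ≤ m) (hδ0 : 0 < δ) (hδ1 : δ < 1) (hP0 : 0 < P) (hP1 : P < 1) :
    P * (2 * m + 1) ^ 2 * δ ≤ m * (m + 1) * δ ^ 2 * (1 - P) + P * (2 * m + 1) ^ 2 := by
  have h1 : P * (2 * m + 1) ^ 2 * δ ≤ P * (2 * m + 1) ^ 2 * 1 := by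
    apply mul_le_mul_of_nonneg_left hδ1.le
    positivity
  have h2 : 0 ≤ m * (m + 1) * δ ^ 2 * (1 - P) := by
    apply mul_nonneg
    · positivity
    · linarith
  nlinarith [h1, h2]

lemma keyNb4 (ρ m P R : ℝ) (hm : 1 ≤ m) (hPR : P = R * ρ) (hR0 : 0 < R) (h0 : 0 < ρ) :
    4 * ρ * (m ^ 2 * R) ≤ P * (2 * m + 1) ^ 2 := by
  rw [hPR]
  nlinarith [mul_nonneg (mul_nonneg hR0.le h0.le) (show (0:ℝ) ≤ 4 * m + 1 by linarith)]

lemma keyNb15 (δ m P R : ℝ) (hm : 1 ≤ m) (hδ0 : 0 < δ) (hδ1 : δ < 1) (hP0 : 0 < P)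
    (hPle : P ≤ R) (hR0 : 0 < R) :
    P * (2 * m + 1) ^ 2 + P * (2 * m + 1) * (m + 1) * δ ≤ 15 * (m ^ 2 * R) := by
  have haux2 : (2 * m + 1) ^ 2 ≤ 9 * m ^ 2 := by nlinarith
  have e1 : P * (2 * m + 1) ^ 2 ≤ R * (9 * m ^ 2) :=
    mul_le_mul hPle haux2 (sq_nonneg _) hR0.le
  have hmm : (2 * m + 1) * (m + 1) ≤ 6 * m ^ 2 := by nlinarith
  have e2 : P * (2 * m + 1) * (m + 1) * δ ≤ P * ((2 * m + 1) * (m + 1)) * 1 := by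
    have : 0 ≤ P * ((2 * m + 1) * (m + 1)) := by positivity
    nlinarith [mul_le_mul_of_nonneg_left hδ1.le this]
  have e3 : P * ((2 * m + 1) * (m + 1)) ≤ R * (6 * m ^ 2) :=
    mul_le_mul hPle hmm (by positivity) hR0.le
  nlinarith [e1, e2, e3]

lemma keyNc2 (re δ m Q : ℝ) (hm : 1 ≤ m) (hδ0 : 0 < δ) (hre : 0 < re) (hQ : 0 < Q) :
    2 * re * (m ^ 2 * (δ * Q)) ≤ re * Q * (m * (2 * m + 1) * δ) := by
  nlinarith [mul_nonneg (mul_nonneg (mul_nonneg hre.le hQ.le) hδ0.le)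
    (show (0:ℝ) ≤ m by linarith)]

lemma keyNc3 (re δ m Q : ℝ) (hm : 1 ≤ m) (hδ0 : 0 < δ) (hre : 0 < re) (hQ : 0 < Q) :
    re * Q * (m * (2 * m + 1) * δ) ≤ 3 * re * (m ^ 2 * (δ * Q)) := by
  nlinarith [mul_nonneg (mul_nonneg (mul_nonneg hre.le hQ.le) hδ0.le)
    (show (0:ℝ) ≤ m * (m - 1) by nlinarith)]

lemma key_div_low (c q NB DA K S X : ℝ) (hq : 0 ≤ q) (hc : 0 ≤ c) (hcq : 18 * c ≤ 2 * q)
    (hDA : DA ≤ 18 * (K * S)) (hNB : 2 * q * (K * X) ≤ NB) (hK : 0 ≤ K) (hX : 0 ≤ X)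
    (hS : 0 ≤ S) : c * X * DA ≤ NB * S := by
  calc c * X * DA ≤ c * X * (18 * (K * S)) :=
        mul_le_mul_of_nonneg_left hDA (mul_nonneg hc hX)
  _ = (18 * c) * (K * X) * S := by ring
  _ ≤ (2 * q) * (K * X) * S :=
        mul_le_mul_of_nonneg_right (mul_le_mul_of_nonneg_right hcq (mul_nonneg hK hX)) hS
  _ = (2 * q * (K * X)) * S := by ring
  _ ≤ NB * S := mul_le_mul_of_nonneg_right hNB hS

lemma key_div_high (c2 t NB DA K S X α : ℝ) (hc2 : 0 ≤ c2) (hNB : NB ≤ t * (K * X))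
    (ht : t ≤ c2 * α) (hDA : α * (K * S) ≤ DA) (hK : 0 ≤ K) (hX : 0 ≤ X) (hS : 0 ≤ S) :
    NB * S ≤ c2 * X * DA := by
  calc NB * S ≤ (t * (K * X)) * S := mul_le_mul_of_nonneg_right hNB hS
  _ ≤ ((c2 * α) * (K * X)) * S :=
        mul_le_mul_of_nonneg_right (mul_le_mul_of_nonneg_right ht (mul_nonneg hK hX)) hS
  _ = (c2 * X) * (α * (K * S)) := by ring
  _ ≤ (c2 * X) * DA := mul_le_mul_of_nonneg_left hDA (mul_nonneg hc2 hX)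
  _ = c2 * X * DA := by ring

/-- With `κ_m = κ_c = 1` and `κ_s = 1 − iδ`, one has `|b_n| ≍ ρ^{2n}/(δ² + ρ^{2n})` and
`|c_n| ≍ δ r_e^{2n}/(δ² + ρ^{2n})`, with constants independent of `n ≥ 1`, `δ ∈ (0,1)`. -/
theorem statement13 (ρ re : ℝ) (h0 : 0 < ρ) (h1 : ρ < 1) (hre : 0 < re) :
    ∃ c₁ c₂ : ℝ, 0 < c₁ ∧ 0 < c₂ ∧
      ∀ δ : ℝ, 0 < δ → δ < 1 → ∀ n : ℕ, 1 ≤ n →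
        (c₁ * (ρ ^ (2 * n) / (δ ^ 2 + ρ ^ (2 * n))) ≤ ‖bn ρ δ re n‖
          ∧ ‖bn ρ δ re n‖ ≤ c₂ * (ρ ^ (2 * n) / (δ ^ 2 + ρ ^ (2 * n))))
        ∧ (c₁ * (δ * re ^ (2 * n) / (δ ^ 2 + ρ ^ (2 * n))) ≤ ‖cn ρ δ re n‖
          ∧ ‖cn ρ δ re n‖ ≤ c₂ * (δ * re ^ (2 * n) / (δ ^ 2 + ρ ^ (2 * n)))) := by
  have hρ3 : ρ ^ 3 < 1 := pow_lt_one₀ h0.le h1 (by norm_num)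
  set α : ℝ := min (1 - ρ ^ 3) ρ with hαdef
  have hα0 : 0 < α := lt_min (by linarith) h0
  refine ⟨min ρ re / 9, 15 * (1 + re) / α,
    div_pos (lt_min h0 hre) (by norm_num),
    div_pos (by linarith : (0:ℝ) < 15 * (1 + re)) hα0, ?_⟩
  set c₁ : ℝ := min ρ re / 9 with hc₁def
  set c₂ : ℝ := 15 * (1 + re) / α with hc₂def
  have hc₁ρ : c₁ ≤ ρ / 9 := by
    have := min_le_left ρ re; rw [hc₁def]; linarith
  have hc₁re : c₁ ≤ re / 9 := by
    have := min_le_right ρ re; rw [hc₁def]; linarith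
  have hc₁0 : 0 < c₁ := div_pos (lt_min h0 hre) (by norm_num)
  have hc₂0 : 0 < c₂ := div_pos (by linarith : (0:ℝ) < 15 * (1 + re)) hα0
  have hc₂α : c₂ * α = 15 * (1 + re) := by
    rw [hc₂def]; field_simp
  intro δ hδ0 hδ1 n hn
  set m : ℝ := (n : ℝ) with hmdef
  have hm : 1 ≤ m := Nat.one_le_cast.mpr hn
  have hm0 : 0 < m := by linarith
  set P : ℝ := ρ ^ (2 * n + 1) with hPdef
  set R : ℝ := ρ ^ (2 * n) with hRdef
  have hPR : P = R * ρ := by rw [hPdef, hRdef, pow_succ]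
  have hR0 : 0 < R := pow_pos h0 _
  have hP0 : 0 < P := pow_pos h0 _
  have hP3 : P ≤ ρ ^ 3 := by
    rw [hPdef]
    exact pow_le_pow_of_le_one h0.le h1.le (by omega)
  have hP1 : P < 1 := lt_of_le_of_lt hP3 hρ3
  have hPle : P ≤ R := by rw [hPR]; exact mul_le_of_le_one_right hR0.le h1.le
  set S : ℝ := δ ^ 2 + R with hSdef
  have hS0 : 0 < S := by rw [hSdef]; positivity
  set A : ℝ := m * (m + 1) * δ ^ 2 * (1 - P) + P * (2 * m + 1) ^ 2 with hAdef
  set B : ℝ := P * (2 * m + 1) ^ 2 * δ with hBdef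
  have hα1 : α ≤ 1 - ρ ^ 3 := min_le_left _ _
  have hα2 : α ≤ ρ := min_le_right _ _
  have h2m1 : 0 < 2 * m + 1 := by linarith
  have hAlow : α * (m ^ 2 * S) ≤ A := by
    rw [hAdef, hSdef]
    exact keyAlow ρ δ m P R α hm hα1 hα2 hα0 hP3 hPR hR0 h0
  have hAhigh : A ≤ 9 * (m ^ 2 * S) := by
    rw [hAdef, hSdef]
    exact keyAhigh δ m P R hm hP0 hPle hR0
  have hA0 : 0 < A :=
    lt_of_lt_of_le (mul_pos hα0 (mul_pos (pow_pos hm0 2) hS0)) hAlow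
  have hBA : B ≤ A := by
    rw [hAdef, hBdef]
    exact keyBA δ m P hm hδ0 hδ1 hP0 hP1
  have hB0 : 0 ≤ B := by
    rw [hBdef]
    exact mul_nonneg (mul_nonneg hP0.le (sq_nonneg _)) hδ0.le
  have hD : Dn ρ δ n = Complex.ofReal (-A) + Complex.ofReal B * Complex.I := by
    rw [hAdef, hBdef, hPdef, hmdef]
    simp only [Dn]
    push_cast
    linear_combination ((((n:ℂ))^2+(n:ℂ))*(δ:ℂ)^2
      - (ρ:ℂ)^(2*n+1)*(n:ℂ)*((n:ℂ)+1)*(δ:ℂ)^2) * Complex.I_sq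
  have hDlow : A ≤ ‖Dn ρ δ n‖ := by
    rw [hD]
    have h := aux_abs_lb (-A) B
    rwa [abs_neg, abs_of_pos hA0] at h
  have hDhigh : ‖Dn ρ δ n‖ ≤ 2 * A := by
    rw [hD]
    have h := aux_abs_ub (-A) B
    rw [abs_neg, abs_of_pos hA0, abs_of_nonneg hB0] at h
    linarith
  have hDA0 : 0 < ‖Dn ρ δ n‖ := lt_of_lt_of_le hA0 hDlow
  have hD18 : ‖Dn ρ δ n‖ ≤ 18 * (m ^ 2 * S) := by linarith
  have hDα : α * (m ^ 2 * S) ≤ ‖Dn ρ δ n‖ := le_trans hAlow hDlow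
  -- numerator of bn
  have hnumB : -(ρ : ℂ) ^ (2 * n + 1) * 1 * (2 * (n : ℂ) + 1)
      * (((n : ℂ) + 1) * (1 - δ * Complex.I) + n * 1)
      = Complex.ofReal (-(P * (2 * m + 1) ^ 2))
        + Complex.ofReal (P * (2 * m + 1) * (m + 1) * δ) * Complex.I := by
    rw [hPdef, hmdef]; push_cast; ring
  have hPm0 : 0 < P * (2 * m + 1) ^ 2 := mul_pos hP0 (pow_pos h2m1 2)
  have hPm1 : 0 < P * (2 * m + 1) * (m + 1) * δ :=
    mul_pos (mul_pos (mul_pos hP0 h2m1) (by linarith)) hδ0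
  have habsb : ‖bn ρ δ re n‖
      = ‖Complex.ofReal (-(P * (2 * m + 1) ^ 2))
        + Complex.ofReal (P * (2 * m + 1) * (m + 1) * δ) * Complex.I‖
        / ‖Dn ρ δ n‖ := by
    rw [bn, norm_div, hnumB]
  set Nb : ℝ := ‖Complex.ofReal (-(P * (2 * m + 1) ^ 2))
        + Complex.ofReal (P * (2 * m + 1) * (m + 1) * δ) * Complex.I‖ with hNbdef
  have hNblow : P * (2 * m + 1) ^ 2 ≤ Nb := by
    have h := aux_abs_lb (-(P * (2 * m + 1) ^ 2)) (P * (2 * m + 1) * (m + 1) * δ)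
    rw [abs_neg, abs_of_pos hPm0] at h
    exact h
  have hNbhigh : Nb ≤ P * (2 * m + 1) ^ 2 + P * (2 * m + 1) * (m + 1) * δ := by
    have h := aux_abs_ub (-(P * (2 * m + 1) ^ 2)) (P * (2 * m + 1) * (m + 1) * δ)
    rwa [abs_neg, abs_of_pos hPm0, abs_of_pos hPm1] at h
  have hNb0 : 0 ≤ Nb := le_trans hPm0.le hNblow
  have hNb4 : 2 * ρ * (m ^ 2 * R) ≤ Nb := by
    have := keyNb4 ρ m P R hm hPR hR0 h0
    have h2 : 2 * ρ * (m ^ 2 * R) ≤ 4 * ρ * (m ^ 2 * R) := by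
      have : 0 ≤ ρ * (m ^ 2 * R) := mul_nonneg h0.le (mul_nonneg (sq_nonneg _) hR0.le)
      linarith
    linarith [hNblow]
  have hNb15 : Nb ≤ 15 * (m ^ 2 * R) :=
    le_trans hNbhigh (keyNb15 δ m P R hm hδ0 hδ1 hP0 hPle hR0)
  -- numerator of cn
  have hnumC : -(re : ℂ) ^ (2 * n + 1) * 1 * (n : ℂ) * (2 * (n : ℂ) + 1)
      * ((1 - δ * Complex.I) - 1)
      = Complex.ofReal (re ^ (2 * n + 1) * m * (2 * m + 1) * δ) * Complex.I := by
    rw [hmdef]; push_cast; ring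
  have hNc0 : 0 < re ^ (2 * n + 1) * m * (2 * m + 1) * δ :=
    mul_pos (mul_pos (mul_pos (pow_pos hre _) hm0) h2m1) hδ0
  have habsc : ‖cn ρ δ re n‖
      = (re ^ (2 * n + 1) * m * (2 * m + 1) * δ) / ‖Dn ρ δ n‖ := by
    rw [cn, norm_div, hnumC, norm_mul, Complex.norm_real, Real.norm_eq_abs, Complex.norm_I, mul_one,
      abs_of_pos hNc0]
  set Nc : ℝ := re ^ (2 * n + 1) * m * (2 * m + 1) * δ with hNcdef
  set Q : ℝ := re ^ (2 * n) with hQdef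
  have hQ0 : 0 < Q := pow_pos hre _
  have hNcR : Nc = re * Q * (m * (2 * m + 1) * δ) := by
    rw [hNcdef, hQdef, pow_succ]; ring
  have hNc2 : 2 * re * (m ^ 2 * (δ * Q)) ≤ Nc := by
    rw [hNcR]; exact keyNc2 re δ m Q hm hδ0 hre hQ0
  have hNc3 : Nc ≤ 3 * re * (m ^ 2 * (δ * Q)) := by
    rw [hNcR]; exact keyNc3 re δ m Q hm hδ0 hre hQ0
  have hNc0' : 0 ≤ Nc := hNc0.le
  refine ⟨⟨?_, ?_⟩, ?_, ?_⟩
  · rw [habsb, ← mul_div_assoc, div_le_div_iff₀ hS0 hDA0]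
    exact key_div_low c₁ ρ Nb (‖Dn ρ δ n‖) (m ^ 2) S R h0.le hc₁0.le
      (by linarith) hD18 hNb4 (sq_nonneg m) hR0.le hS0.le
  · rw [habsb, ← mul_div_assoc, div_le_div_iff₀ hDA0 hS0]
    have h15 : (15:ℝ) ≤ c₂ * α := by rw [hc₂α]; linarith
    exact key_div_high c₂ 15 Nb (‖Dn ρ δ n‖) (m ^ 2) S R α hc₂0.le
      hNb15 h15 hDα (sq_nonneg m) hR0.le hS0.le
  · rw [habsc, ← mul_div_assoc, div_le_div_iff₀ hS0 hDA0]
    exact key_div_low c₁ re Nc (‖Dn ρ δ n‖) (m ^ 2) S (δ * Q) hre.le hc₁0.le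
      (by linarith) hD18 hNc2 (sq_nonneg m) (mul_nonneg hδ0.le hQ0.le) hS0.le
  · rw [habsc, ← mul_div_assoc, div_le_div_iff₀ hDA0 hS0]
    have h3re : 3 * re ≤ c₂ * α := by rw [hc₂α]; linarith
    exact key_div_high c₂ (3 * re) Nc (‖Dn ρ δ n‖) (m ^ 2) S (δ * Q) α hc₂0.le
      hNc3 h3re hDα (sq_nonneg m) (mul_nonneg hδ0.le hQ0.le) hS0.le
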